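/- Let c ∈ (0, 1/2), let θ be a real-valued random variable taking the values ±√(2+√3) each with probability (3−√3)/12 and ±√(2−√3) each with probability (3+√3)/12, and let η be a random variable independent of θ with P(η = 1) = P(η = −1) = 1/2. Define Θ₀ := θ + √(1/(2c) − 1)·η and Θ₁ := 1 − √(2c/(1−2c))·η·θ. Then E[Θ₀] = 0, E[Θ₀²] = 1/(2c), E[θ·Θ₀] = 1, E[Θ₁] = 1, E[θ·Θ₁] = 0, E[θ²·Θ₁] = 1, and E[Θ₀·θ·Θ₁] = 0. -/

import Mathlib

set_option maxHeartbeats 2000000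

open MeasureTheory ProbabilityTheory

lemma integral_ind4 {Ω : Type*} [MeasureSpace Ω] [IsFiniteMeasure (ℙ : Measure Ω)]
    (f : Ω → ℝ) (s₁ s₂ s₃ s₄ : Set Ω)
    (m₁ : MeasurableSet s₁) (m₂ : MeasurableSet s₂) (m₃ : MeasurableSet s₃)
    (m₄ : MeasurableSet s₄) (c₁ c₂ c₃ c₄ : ℝ)
    (hae : f =ᵐ[ℙ] fun ω => s₁.indicator (fun _ => c₁) ω + s₂.indicator (fun _ => c₂) ω +
      s₃.indicator (fun _ => c₃) ω + s₄.indicator (fun _ => c₄) ω) :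
    ∫ ω, f ω = c₁ * (ℙ s₁).toReal + c₂ * (ℙ s₂).toReal + c₃ * (ℙ s₃).toReal
      + c₄ * (ℙ s₄).toReal := by
  have I : ∀ (s : Set Ω), MeasurableSet s → ∀ (c : ℝ),
      Integrable (s.indicator (fun _ => c)) ℙ :=
    fun s hs c => (integrable_const c).indicator hs
  have e4 := integral_add (μ := ℙ)
    (f := fun ω => s₁.indicator (fun _ => c₁) ω + s₂.indicator (fun _ => c₂) ω +
      s₃.indicator (fun _ => c₃) ω) (g := s₄.indicator (fun _ => c₄))
    (((I _ m₁ _).add (I _ m₂ _)).add (I _ m₃ _)) (I _ m₄ _)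
  have e3 := integral_add (μ := ℙ)
    (f := fun ω => s₁.indicator (fun _ => c₁) ω + s₂.indicator (fun _ => c₂) ω)
    (g := s₃.indicator (fun _ => c₃)) ((I _ m₁ _).add (I _ m₂ _)) (I _ m₃ _)
  have e2 := integral_add (μ := ℙ) (f := s₁.indicator (fun _ => c₁))
    (g := s₂.indicator (fun _ => c₂)) (I _ m₁ _) (I _ m₂ _)
  rw [integral_congr_ae hae, e4, e3, e2,
    integral_indicator_const _ m₁, integral_indicator_const _ m₂,
    integral_indicator_const _ m₃, integral_indicator_const _ m₄]
  simp [smul_eq_mul, measureReal_def]; ring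

theorem stmt3
    (Ω : Type*) [MeasureSpace Ω] [IsProbabilityMeasure (ℙ : Measure Ω)]
    (c : ℝ) (hc : 0 < c) (hc' : c < 1 / 2)
    (θ η : Ω → ℝ) (hθ : Measurable θ) (hη : Measurable η)
    (hindep : IndepFun θ η)
    (h1 : ℙ {ω | θ ω = Real.sqrt (2 + Real.sqrt 3)} = ENNReal.ofReal ((3 - Real.sqrt 3) / 12))
    (h2 : ℙ {ω | θ ω = -Real.sqrt (2 + Real.sqrt 3)} = ENNReal.ofReal ((3 - Real.sqrt 3) / 12))
    (h3 : ℙ {ω | θ ω = Real.sqrt (2 - Real.sqrt 3)} = ENNReal.ofReal ((3 + Real.sqrt 3) / 12))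
    (h4 : ℙ {ω | θ ω = -Real.sqrt (2 - Real.sqrt 3)} = ENNReal.ofReal ((3 + Real.sqrt 3) / 12))
    (h5 : ℙ {ω | η ω = 1} = ENNReal.ofReal (1 / 2))
    (h6 : ℙ {ω | η ω = -1} = ENNReal.ofReal (1 / 2))
    (Θ₀ Θ₁ : Ω → ℝ)
    (hΘ₀ : Θ₀ = fun ω => θ ω + Real.sqrt (1 / (2 * c) - 1) * η ω)
    (hΘ₁ : Θ₁ = fun ω => 1 - Real.sqrt (2 * c / (1 - 2 * c)) * η ω * θ ω) :
    (∫ ω, Θ₀ ω) = 0 ∧ (∫ ω, (Θ₀ ω) ^ 2) = 1 / (2 * c) ∧ (∫ ω, θ ω * Θ₀ ω) = 1 ∧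
    (∫ ω, Θ₁ ω) = 1 ∧ (∫ ω, θ ω * Θ₁ ω) = 0 ∧ (∫ ω, (θ ω) ^ 2 * Θ₁ ω) = 1 ∧
    (∫ ω, Θ₀ ω * θ ω * Θ₁ ω) = 0 := by
  set s := Real.sqrt 3 with hs
  set a := Real.sqrt (2 + s) with hadef
  set b := Real.sqrt (2 - s) with hbdef
  have hs0 : (0:ℝ) ≤ 3 := by norm_num
  have hssq : s ^ 2 = 3 := Real.sq_sqrt hs0
  have hsnn : 0 ≤ s := Real.sqrt_nonneg 3
  have hs1 : 1 < s := by nlinarith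
  have hs2 : s < 2 := by nlinarith
  have ha2 : a ^ 2 = 2 + s := Real.sq_sqrt (by linarith)
  have hb2 : b ^ 2 = 2 - s := Real.sq_sqrt (by linarith)
  have hann : 0 ≤ a := Real.sqrt_nonneg _
  have hbnn : 0 ≤ b := Real.sqrt_nonneg _
  have ha0 : 0 < a := by nlinarith
  have hb0 : 0 < b := by nlinarith
  have hba : b < a := by nlinarith
  have ha1 : 1 ≤ a := by nlinarith
  -- distinctness
  have hne1 : a ≠ -a := by intro h; nlinarith
  have hne2 : a ≠ b := by intro h; nlinarith
  have hne3 : a ≠ -b := by intro h; nlinarith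
  have hne4 : -a ≠ b := by intro h; nlinarith
  have hne5 : -a ≠ -b := by intro h; nlinarith
  have hne6 : b ≠ -b := by intro h; nlinarith
  have hpnn : (0:ℝ) ≤ (3 - s) / 12 := by linarith
  clear_value s a b
  have hqnn : (0:ℝ) ≤ (3 + s) / 12 := by linarith
  -- measurable sets
  have m1 : MeasurableSet {ω | θ ω = a} := hθ (measurableSet_singleton a)
  have m2 : MeasurableSet {ω | θ ω = -a} := hθ (measurableSet_singleton (-a))
  have m3 : MeasurableSet {ω | θ ω = b} := hθ (measurableSet_singleton b)
  have m4 : MeasurableSet {ω | θ ω = -b} := hθ (measurableSet_singleton (-b))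
  have m5 : MeasurableSet {ω | η ω = 1} := hη (measurableSet_singleton 1)
  have m6 : MeasurableSet {ω | η ω = -1} := hη (measurableSet_singleton (-1))
  -- a.e. support of θ
  have hθae : ∀ᵐ ω ∂(ℙ : Measure Ω), θ ω = a ∨ θ ω = -a ∨ θ ω = b ∨ θ ω = -b := by
    have hd12 : Disjoint {ω | θ ω = a} {ω | θ ω = -a} := by
      rw [Set.disjoint_left]; rintro ω h h'; exact hne1 (h ▸ h')
    have hd34 : Disjoint {ω | θ ω = b} {ω | θ ω = -b} := by
      rw [Set.disjoint_left]; rintro ω h h'; exact hne6 (h ▸ h')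
    have hd : Disjoint ({ω | θ ω = a} ∪ {ω | θ ω = -a}) ({ω | θ ω = b} ∪ {ω | θ ω = -b}) := by
      rw [Set.disjoint_left]
      rintro ω (h | h) (h' | h')
      · exact hne2 (h ▸ h')
      · exact hne3 (h ▸ h')
      · exact hne4 (h ▸ h')
      · exact hne5 (h ▸ h')
    have hu : ℙ ({ω | θ ω = a} ∪ {ω | θ ω = -a} ∪ ({ω | θ ω = b} ∪ {ω | θ ω = -b})) = 1 := by
      rw [measure_union hd (m3.union m4), measure_union hd12 m2, measure_union hd34 m4,
        h1, h2, h3, h4, ← ENNReal.ofReal_add hpnn hpnn, ← ENNReal.ofReal_add hqnn hqnn,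
        ← ENNReal.ofReal_add (by linarith) (by linarith),
        show (3 - s) / 12 + (3 - s) / 12 + ((3 + s) / 12 + (3 + s) / 12) = 1 by ring,
        ENNReal.ofReal_one]
    have hcompl : ℙ ({ω | θ ω = a} ∪ {ω | θ ω = -a} ∪ ({ω | θ ω = b} ∪ {ω | θ ω = -b}))ᶜ = 0 := by
      rw [measure_compl ((m1.union m2).union (m3.union m4)) (measure_ne_top _ _), hu,
        measure_univ, tsub_self]
    rw [ae_iff]
    have hset : {ω | ¬(θ ω = a ∨ θ ω = -a ∨ θ ω = b ∨ θ ω = -b)} =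
        ({ω | θ ω = a} ∪ {ω | θ ω = -a} ∪ ({ω | θ ω = b} ∪ {ω | θ ω = -b}))ᶜ := by
      ext ω
      simp only [Set.mem_setOf_eq, Set.mem_compl_iff, Set.mem_union, not_or]
      tauto
    rw [hset]
    exact hcompl
  -- a.e. support of η
  have hηae : ∀ᵐ ω ∂(ℙ : Measure Ω), η ω = 1 ∨ η ω = -1 := by
    have hd : Disjoint {ω | η ω = 1} {ω | η ω = -1} := by
      rw [Set.disjoint_left]; rintro ω h h'
      simp only [Set.mem_setOf_eq] at h h'; rw [h] at h'; norm_num at h'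
    have hu : ℙ ({ω | η ω = 1} ∪ {ω | η ω = -1}) = 1 := by
      rw [measure_union hd m6, h5, h6, ← ENNReal.ofReal_add (by norm_num) (by norm_num)]
      norm_num
    have hcompl : ℙ ({ω | η ω = 1} ∪ {ω | η ω = -1})ᶜ = 0 := by
      rw [measure_compl (m5.union m6) (measure_ne_top _ _), hu, measure_univ, tsub_self]
    rw [ae_iff]
    have hset : {ω | ¬(η ω = 1 ∨ η ω = -1)} = ({ω | η ω = 1} ∪ {ω | η ω = -1})ᶜ := by
      ext ω
      simp only [Set.mem_setOf_eq, Set.mem_compl_iff, Set.mem_union, not_or]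
    rw [hset]
    exact hcompl
  -- moments of θ
  have momθ : ∀ g : ℝ → ℝ, ∫ ω, g (θ ω) = g a * ((3 - s) / 12) + g (-a) * ((3 - s) / 12)
      + g b * ((3 + s) / 12) + g (-b) * ((3 + s) / 12) := by
    intro g
    have hae : (fun ω => g (θ ω)) =ᵐ[ℙ] fun ω =>
        ({ω | θ ω = a}).indicator (fun _ => g a) ω +
        ({ω | θ ω = -a}).indicator (fun _ => g (-a)) ω +
        ({ω | θ ω = b}).indicator (fun _ => g b) ω +
        ({ω | θ ω = -b}).indicator (fun _ => g (-b)) ω := by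
      filter_upwards [hθae] with ω h
      rcases h with h | h | h | h <;>
        simp [Set.indicator_apply, h, hne1, hne2, hne3, hne4, hne5, hne6,
          hne1.symm, hne2.symm, hne3.symm, hne4.symm, hne5.symm, hne6.symm]
    rw [integral_ind4 _ _ _ _ _ m1 m2 m3 m4 _ _ _ _ hae, h1, h2, h3, h4,
      ENNReal.toReal_ofReal hpnn, ENNReal.toReal_ofReal hqnn]
  -- moments of η
  have momη : ∀ g : ℝ → ℝ, ∫ ω, g (η ω) = g 1 * (1/2) + g (-1) * (1/2) := by
    intro g
    have hae : (fun ω => g (η ω)) =ᵐ[ℙ] fun ω =>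
        ({ω | η ω = 1}).indicator (fun _ => g 1) ω +
        ({ω | η ω = -1}).indicator (fun _ => g (-1)) ω +
        (∅ : Set Ω).indicator (fun _ => (0:ℝ)) ω +
        (∅ : Set Ω).indicator (fun _ => (0:ℝ)) ω := by
      filter_upwards [hηae] with ω h
      rcases h with h | h <;>
        simp [Set.indicator_apply, h, show (1:ℝ) ≠ -1 by norm_num,
          show (-1:ℝ) ≠ 1 by norm_num]
    rw [integral_ind4 _ _ _ _ _ m5 m6 MeasurableSet.empty MeasurableSet.empty _ _ _ _ hae,
      h5, h6, ENNReal.toReal_ofReal (by norm_num : (0:ℝ) ≤ 1/2)]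
    simp
  have Eη2 : ∫ ω, (η ω) ^ 2 = 1 := by
    have h := momη (fun x => x ^ 2); rw [h]; norm_num
  have Eθ : ∫ ω, θ ω = 0 := by
    have h := momθ (fun x => x); rw [h]; ring
  have Eθ2 : ∫ ω, (θ ω) ^ 2 = 1 := by
    have h := momθ (fun x => x ^ 2); rw [h]
    linear_combination ((3 - s) / 6) * ha2 + ((3 + s) / 6) * hb2 - (1 / 3) * hssq
  have Eθ3 : ∫ ω, (θ ω) ^ 3 = 0 := by
    have h := momθ (fun x => x ^ 3); rw [h]; ring
  have Eη : ∫ ω, η ω = 0 := by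
    have h := momη (fun x => x); rw [h]; ring
  -- boundedness
  have hbdθ : ∀ᵐ ω ∂(ℙ : Measure Ω), |θ ω| ≤ a := by
    filter_upwards [hθae] with ω h
    rcases h with h | h | h | h <;> rw [h, abs_le] <;> constructor <;> linarith
  have hbdη : ∀ᵐ ω ∂(ℙ : Measure Ω), |η ω| ≤ 1 := by
    filter_upwards [hηae] with ω h
    rcases h with h | h <;> rw [h, abs_le] <;> constructor <;> norm_num
  have mkInt : ∀ g : Ω → ℝ, Measurable g → (∀ᵐ ω ∂(ℙ : Measure Ω), ‖g ω‖ ≤ a ^ 3) →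
      Integrable g ℙ :=
    fun g hg hb => ⟨hg.aestronglyMeasurable, HasFiniteIntegral.of_bounded hb⟩
  have Iθ : Integrable θ ℙ := by
    refine mkInt θ hθ ?_
    filter_upwards [hbdθ] with ω h
    rw [Real.norm_eq_abs]; nlinarith [abs_nonneg (θ ω)]
  have Iη : Integrable η ℙ := by
    refine mkInt η hη ?_
    filter_upwards [hbdη] with ω h
    rw [Real.norm_eq_abs]; nlinarith [abs_nonneg (η ω)]
  have Iθ2 : Integrable (fun ω => (θ ω) ^ 2) ℙ := by
    refine mkInt _ (hθ.pow_const 2) ?_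
    filter_upwards [hbdθ] with ω h
    rw [Real.norm_eq_abs, abs_pow]; nlinarith [abs_nonneg (θ ω)]
  have Iη2 : Integrable (fun ω => (η ω) ^ 2) ℙ := by
    refine mkInt _ (hη.pow_const 2) ?_
    filter_upwards [hbdη] with ω h
    rw [Real.norm_eq_abs, abs_pow]; nlinarith [abs_nonneg (η ω)]
  have Iθη : Integrable (fun ω => θ ω * η ω) ℙ := by
    refine mkInt _ (hθ.mul hη) ?_
    filter_upwards [hbdθ, hbdη] with ω h h'
    rw [Real.norm_eq_abs, abs_mul]; nlinarith [abs_nonneg (θ ω), abs_nonneg (η ω)]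
  have Iθ2η : Integrable (fun ω => (θ ω) ^ 2 * η ω) ℙ := by
    refine mkInt _ ((hθ.pow_const 2).mul hη) ?_
    filter_upwards [hbdθ, hbdη] with ω h h'
    rw [Real.norm_eq_abs, abs_mul, abs_pow]
    nlinarith [abs_nonneg (θ ω), abs_nonneg (η ω), sq_nonneg (|θ ω| - a)]
  have Iθ3η : Integrable (fun ω => (θ ω) ^ 3 * η ω) ℙ := by
    refine mkInt _ ((hθ.pow_const 3).mul hη) ?_
    filter_upwards [hbdθ, hbdη] with ω h h'
    rw [Real.norm_eq_abs, abs_mul, abs_pow]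
    nlinarith [abs_nonneg (θ ω), abs_nonneg (η ω), sq_nonneg (|θ ω| - a),
      mul_nonneg (mul_nonneg (abs_nonneg (θ ω)) (abs_nonneg (θ ω))) (abs_nonneg (θ ω))]
  have Iθ2η2 : Integrable (fun ω => (θ ω) ^ 2 * (η ω) ^ 2) ℙ := by
    refine mkInt _ ((hθ.pow_const 2).mul (hη.pow_const 2)) ?_
    filter_upwards [hbdθ, hbdη] with ω h h'
    rw [Real.norm_eq_abs, abs_mul, abs_pow, abs_pow]
    have e1 : |η ω| ^ 2 ≤ 1 := by nlinarith [abs_nonneg (η ω)]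
    have e2 : |θ ω| ^ 2 ≤ a ^ 2 := by nlinarith [abs_nonneg (θ ω)]
    nlinarith [abs_nonneg (θ ω), abs_nonneg (η ω), sq_nonneg (|θ ω|), sq_nonneg (|η ω|)]
  -- mixed moments via independence
  have Eθη : ∫ ω, θ ω * η ω = 0 := by
    rw [hindep.integral_fun_mul_eq_mul_integral hθ.aestronglyMeasurable hη.aestronglyMeasurable, Eθ, Eη]; ring
  have hind2 : IndepFun (fun ω => (θ ω) ^ 2) η ℙ :=
    hindep.comp (measurable_id.pow_const 2) measurable_id
  have hind3 : IndepFun (fun ω => (θ ω) ^ 3) η ℙ :=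
    hindep.comp (measurable_id.pow_const 3) measurable_id
  have Eθ2η : ∫ ω, (θ ω) ^ 2 * η ω = 0 := by
    rw [hind2.integral_fun_mul_eq_mul_integral (hθ.pow_const 2).aestronglyMeasurable hη.aestronglyMeasurable,
      Eθ2, Eη]; ring
  have Eθ3η : ∫ ω, (θ ω) ^ 3 * η ω = 0 := by
    rw [hind3.integral_fun_mul_eq_mul_integral (hθ.pow_const 3).aestronglyMeasurable hη.aestronglyMeasurable,
      Eθ3, Eη]; ring
  have Eθ2η2 : ∫ ω, (θ ω) ^ 2 * (η ω) ^ 2 = 1 := by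
    have hae : (fun ω => (θ ω) ^ 2 * (η ω) ^ 2) =ᵐ[ℙ] fun ω => (θ ω) ^ 2 := by
      filter_upwards [hηae] with ω h
      rcases h with h | h <;> rw [h] <;> ring
    rw [integral_congr_ae hae, Eθ2]
  -- constants
  set A := Real.sqrt (1 / (2 * c) - 1) with hAdef
  set S := Real.sqrt (2 * c / (1 - 2 * c)) with hSdef
  have h2c : (0:ℝ) < 2 * c := by linarith
  have h2c' : 2 * c < 1 := by linarith
  have hA2 : A ^ 2 = 1 / (2 * c) - 1 := by
    rw [hAdef]
    refine Real.sq_sqrt ?_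
    rw [le_sub_iff_add_le, zero_add, le_div_iff₀ h2c]
    linarith
  have hAS : A * S = 1 := by
    rw [hAdef, hSdef, ← Real.sqrt_mul (by
      rw [le_sub_iff_add_le, zero_add, le_div_iff₀ h2c]; linarith),
      show (1 / (2 * c) - 1) * (2 * c / (1 - 2 * c)) = 1 by
        field_simp
        exact div_self (by linarith), Real.sqrt_one]
  clear_value A S
  refine ⟨?_, ?_, ?_, ?_, ?_, ?_, ?_⟩
  · simp only [hΘ₀]
    rw [integral_add Iθ (Iη.const_mul A), integral_const_mul, Eθ, Eη]; ring
  · simp only [hΘ₀]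
    rw [show (fun ω => (θ ω + A * η ω) ^ 2) =
        fun ω => (θ ω) ^ 2 + 2 * A * (θ ω * η ω) + A ^ 2 * (η ω) ^ 2 by funext ω; ring,
      integral_add (μ := ℙ) (f := fun ω => (θ ω) ^ 2 + 2 * A * (θ ω * η ω))
        (g := fun ω => A ^ 2 * (η ω) ^ 2)
        (Iθ2.add (Iθη.const_mul (2 * A))) (Iη2.const_mul (A ^ 2)),
      integral_add (μ := ℙ) (f := fun ω => (θ ω) ^ 2) (g := fun ω => 2 * A * (θ ω * η ω))
        Iθ2 (Iθη.const_mul (2 * A)), integral_const_mul, integral_const_mul,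
      Eθ2, Eθη, Eη2, hA2]
    field_simp
    ring
  · simp only [hΘ₀]
    rw [show (fun ω => θ ω * (θ ω + A * η ω)) =
        fun ω => (θ ω) ^ 2 + A * (θ ω * η ω) by funext ω; ring,
      integral_add Iθ2 (Iθη.const_mul A), integral_const_mul, Eθ2, Eθη]; ring
  · simp only [hΘ₁]
    rw [show (fun ω => 1 - S * η ω * θ ω) =
        fun ω => 1 - S * (θ ω * η ω) by funext ω; ring,
      integral_sub (integrable_const 1) (Iθη.const_mul S), integral_const_mul, Eθη,
      integral_const]
    simp
  · simp only [hΘ₁]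
    rw [show (fun ω => θ ω * (1 - S * η ω * θ ω)) =
        fun ω => θ ω - S * ((θ ω) ^ 2 * η ω) by funext ω; ring,
      integral_sub Iθ (Iθ2η.const_mul S), integral_const_mul, Eθ, Eθ2η]; ring
  · simp only [hΘ₁]
    rw [show (fun ω => (θ ω) ^ 2 * (1 - S * η ω * θ ω)) =
        fun ω => (θ ω) ^ 2 - S * ((θ ω) ^ 3 * η ω) by funext ω; ring,
      integral_sub Iθ2 (Iθ3η.const_mul S), integral_const_mul, Eθ2, Eθ3η]; ring
  · simp only [hΘ₀, hΘ₁]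
    rw [show (fun ω => (θ ω + A * η ω) * θ ω * (1 - S * η ω * θ ω)) =
        fun ω => (θ ω) ^ 2 + A * (θ ω * η ω) - S * ((θ ω) ^ 3 * η ω)
          - A * S * ((θ ω) ^ 2 * (η ω) ^ 2) by funext ω; ring,
      integral_sub (μ := ℙ)
        (f := fun ω => (θ ω) ^ 2 + A * (θ ω * η ω) - S * ((θ ω) ^ 3 * η ω))
        (g := fun ω => A * S * ((θ ω) ^ 2 * (η ω) ^ 2))
        ((Iθ2.add (Iθη.const_mul A)).sub (Iθ3η.const_mul S)) (Iθ2η2.const_mul (A * S)),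
      integral_sub (μ := ℙ) (f := fun ω => (θ ω) ^ 2 + A * (θ ω * η ω))
        (g := fun ω => S * ((θ ω) ^ 3 * η ω))
        (Iθ2.add (Iθη.const_mul A)) (Iθ3η.const_mul S),
      integral_add (μ := ℙ) (f := fun ω => (θ ω) ^ 2) (g := fun ω => A * (θ ω * η ω))
        Iθ2 (Iθη.const_mul A), integral_const_mul, integral_const_mul,
      integral_const_mul, Eθ2, Eθη, Eθ3η, Eθ2η2]
    linear_combination -hAS
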